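/- Let ε ∈ (0,1), let n, d be positive integers, and let X = (x^1,…,x^n) be a sequence in [0,1)^d. Let x* ∈ [0,1]^d satisfy δ(x*) = sup_{x∈[0,1]^d} δ(x) and assume V_{x*} ≥ ε. Then the π^d-measure of the set { r ∈ [0,1]^d : δ(x*) − δ(r) ≤ ε } is at least ε^d. -/

import Mathlib

open Finset MeasureTheory

noncomputable def starVol {d : ℕ} (y : Fin d → ℝ) : ℝ := ∏ j, y j

noncomputable def countOpen {n d : ℕ} (X : Fin n → Fin d → ℝ) (y : Fin d → ℝ) : ℕ :=
  (Finset.univ.filter fun i => ∀ j, X i j < y j).card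

/-- δ(y) = V_y - A(y,X)/n -/
noncomputable def delta {n d : ℕ} (X : Fin n → Fin d → ℝ) (y : Fin d → ℝ) : ℝ :=
  starVol y - (countOpen X y : ℝ) / n

/-- The probability measure π^d on `[0,1]^d` with density `x ↦ ∏_j d·x_j^(d-1)` with
respect to the Lebesgue measure. -/
noncomputable def piMeas (d : ℕ) : Measure (Fin d → ℝ) :=
  (volume.restrict (Set.Icc (0 : Fin d → ℝ) 1)).withDensity
    (fun x => ENNReal.ofReal (∏ j, (d : ℝ) * x j ^ (d - 1)))

/-- If `x*` maximizes δ over `[0,1]^d` and `V_{x*} ≥ ε`, then the π^d-measure of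
`{r ∈ [0,1]^d : δ(x*) - δ(r) ≤ ε}` is at least `ε^d`. -/
theorem stmt11 (n d : ℕ) (hn : 0 < n) (hd : 0 < d) (ε : ℝ) (hε : ε ∈ Set.Ioo (0 : ℝ) 1)
    (X : Fin n → Fin d → ℝ) (hX : ∀ i j, X i j ∈ Set.Ico (0 : ℝ) 1)
    (xs : Fin d → ℝ) (hxs : ∀ j, xs j ∈ Set.Icc (0 : ℝ) 1)
    (hmax : ∀ x : Fin d → ℝ, (∀ j, x j ∈ Set.Icc (0 : ℝ) 1) → delta X x ≤ delta X xs)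
    (hV : ε ≤ starVol xs) :
    ENNReal.ofReal (ε ^ d) ≤
      piMeas d {r : Fin d → ℝ | (∀ j, r j ∈ Set.Icc (0 : ℝ) 1) ∧
        delta X xs - delta X r ≤ ε} := by
  have hV0 : 0 < starVol xs := lt_of_lt_of_le hε.1 hV
  have hc0 : 0 ≤ 1 - ε / starVol xs := by
    have : ε / starVol xs ≤ 1 := (div_le_one hV0).mpr hV
    linarith
  have hc1 : 1 - ε / starVol xs ≤ 1 := by
    have : 0 ≤ ε / starVol xs := div_nonneg hε.1.le hV0.le
    linarith
  obtain ⟨t, htdef⟩ : ∃ t : ℝ, t = (1 - ε / starVol xs) ^ ((d : ℝ)⁻¹) := ⟨_, rfl⟩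
  have ht0 : 0 ≤ t := htdef ▸ Real.rpow_nonneg hc0 _
  have ht1 : t ≤ 1 := htdef ▸ Real.rpow_le_one hc0 hc1 (by positivity)
  have htd : t ^ d = 1 - ε / starVol xs := htdef ▸ Real.rpow_inv_natCast_pow hc0 hd.ne'
  obtain ⟨a, hadef⟩ : ∃ a : Fin d → ℝ, a = fun j => t * xs j := ⟨_, rfl⟩
  have ha : ∀ j, a j = t * xs j := fun j => by rw [hadef]
  have ha0 : ∀ j, 0 ≤ a j := fun j => (ha j) ▸ mul_nonneg ht0 (hxs j).1
  have hale : ∀ j, a j ≤ xs j := fun j => (ha j) ▸ mul_le_of_le_one_left (hxs j).1 ht1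
  set S : Set (Fin d → ℝ) := Set.univ.pi fun j => Set.Icc (a j) (xs j) with hSdef
  have hSm : MeasurableSet S := MeasurableSet.univ_pi fun j => measurableSet_Icc
  have hprodA : ∏ j, a j = starVol xs - ε := by
    have h1 : ∏ j, a j = t ^ d * starVol xs := by
      rw [hadef]
      simp [Finset.prod_mul_distrib, starVol]
    rw [h1, htd]
    field_simp
  -- S is contained in the target set
  have hsub : S ⊆ {r : Fin d → ℝ | (∀ j, r j ∈ Set.Icc (0 : ℝ) 1) ∧
      delta X xs - delta X r ≤ ε} := by
    intro r hr
    have hrj : ∀ j, r j ∈ Set.Icc (a j) (xs j) := fun j => hr j (Set.mem_univ j)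
    constructor
    · exact fun j => ⟨(ha0 j).trans (hrj j).1, (hrj j).2.trans (hxs j).2⟩
    · have hcount : (countOpen X r : ℝ) ≤ (countOpen X xs : ℝ) := by
        have : countOpen X r ≤ countOpen X xs := by
          apply Finset.card_le_card
          intro i hi
          simp only [Finset.mem_filter] at hi ⊢
          exact ⟨hi.1, fun j => lt_of_lt_of_le (hi.2 j) (hrj j).2⟩
        exact_mod_cast this
      have hvr : starVol xs - ε ≤ starVol r := by
        rw [← hprodA]
        exact Finset.prod_le_prod (fun j _ => ha0 j) (fun j _ => (hrj j).1)
      have hdiv : (countOpen X r : ℝ) / n ≤ (countOpen X xs : ℝ) / n := by gcongr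
      simp only [delta]
      linarith
  calc ENNReal.ofReal (ε ^ d) ≤ piMeas d S := ?_
    _ ≤ _ := measure_mono hsub
  have hSsub : S ⊆ Set.Icc (0 : Fin d → ℝ) 1 := by
    intro r hr
    have hrj : ∀ j, r j ∈ Set.Icc (a j) (xs j) := fun j => hr j (Set.mem_univ j)
    exact ⟨fun j => (ha0 j).trans (hrj j).1, fun j => (hrj j).2.trans (hxs j).2⟩
  -- the indicator function version of the density
  obtain ⟨g, hgdef⟩ : ∃ g : Fin d → ℝ → ℝ,
      g = fun j => Set.indicator (Set.Icc (a j) (xs j)) (fun r => (d : ℝ) * r ^ (d - 1)) :=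
    ⟨_, rfl⟩
  have hg : ∀ j, g j = Set.indicator (Set.Icc (a j) (xs j)) (fun r => (d : ℝ) * r ^ (d - 1)) :=
    fun j => by rw [hgdef]
  have hg0 : ∀ j r, 0 ≤ g j r := by
    intro j r
    rw [hg j]
    by_cases hrm : r ∈ Set.Icc (a j) (xs j)
    · rw [Set.indicator_of_mem hrm]
      exact mul_nonneg (Nat.cast_nonneg d) (pow_nonneg ((ha0 j).trans hrm.1) _)
    · rw [Set.indicator_of_notMem hrm]
  have hps : piMeas d S = ∫⁻ x : Fin d → ℝ, ENNReal.ofReal (∏ j, g j (x j)) ∂volume := by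
    rw [piMeas, withDensity_apply _ hSm, Measure.restrict_restrict hSm,
      Set.inter_eq_self_of_subset_left hSsub, ← MeasureTheory.lintegral_indicator hSm]
    congr 1
    funext x
    by_cases hx : x ∈ S
    · rw [Set.indicator_of_mem hx]
      congr 1
      refine Finset.prod_congr rfl fun j _ => ?_
      rw [hg j, Set.indicator_of_mem (hx j (Set.mem_univ j))]
    · rw [Set.indicator_of_notMem hx]
      obtain ⟨j, -, hj⟩ : ∃ j ∈ Set.univ, x j ∉ Set.Icc (a j) (xs j) := by
        by_contra h
        push_neg at h
        exact hx fun j hj => h j hj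
      rw [Finset.prod_eq_zero (Finset.mem_univ j) (by rw [hg j, Set.indicator_of_notMem hj]),
        ENNReal.ofReal_zero]
  rw [hps]
  have hint : ∀ j, Integrable (g j) volume := by
    intro j
    rw [hg j, integrable_indicator_iff measurableSet_Icc]
    exact (by fun_prop : Continuous fun r : ℝ => (d : ℝ) * r ^ (d - 1)).integrableOn_Icc
  have hintp : Integrable (fun x : Fin d → ℝ => ∏ j, g j (x j)) volume :=
    Integrable.fintype_prod hint
  have hnn : 0 ≤ᵐ[(volume : Measure (Fin d → ℝ))] fun x => ∏ j, g j (x j) :=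
    Filter.Eventually.of_forall fun x => Finset.prod_nonneg fun j _ => hg0 j (x j)
  rw [← MeasureTheory.ofReal_integral_eq_lintegral_ofReal hintp hnn,
    MeasureTheory.integral_fintype_prod_volume_eq_prod (f := g)]
  have hone : ∀ j : Fin d, ∫ r, g j r = xs j ^ d - a j ^ d := by
    intro j
    rw [hg j, MeasureTheory.integral_indicator measurableSet_Icc,
      MeasureTheory.integral_Icc_eq_integral_Ioc,
      ← intervalIntegral.integral_of_le (hale j)]
    have hd1 : d - 1 + 1 = d := Nat.succ_pred_eq_of_pos hd
    simp only [intervalIntegral.integral_const_mul, integral_pow, hd1]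
    have hdne : (d : ℝ) ≠ 0 := Nat.cast_ne_zero.mpr hd.ne'
    field_simp
    rw [← Nat.cast_add_one, hd1]
    ring
  have hprod : ∏ j, ∫ r, g j r = ε ^ d := by
    have hterm : ∀ j : Fin d, ∫ r, g j r = xs j ^ d * (ε / starVol xs) := by
      intro j
      rw [hone j, ha j, mul_pow, htd]
      ring
    calc ∏ j, ∫ r, g j r = ∏ j : Fin d, (xs j ^ d * (ε / starVol xs)) :=
          Finset.prod_congr rfl fun j _ => hterm j
      _ = (∏ j, xs j ^ d) * (ε / starVol xs) ^ d := by
          rw [Finset.prod_mul_distrib, Finset.prod_const, Finset.card_univ, Fintype.card_fin]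
      _ = starVol xs ^ d * (ε / starVol xs) ^ d := by rw [Finset.prod_pow]; rfl
      _ = (starVol xs * (ε / starVol xs)) ^ d := (mul_pow _ _ _).symm
      _ = ε ^ d := by rw [mul_div_cancel₀ _ hV0.ne']
  rw [hprod]
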